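/- arXiv:2008.06658 — 5 statements merged into one kernel-verified Lean document; each statement's English description precedes it below -/
import Mathlib

section
/- Let f : A → X be a lattice isomorphic embedding of Banach lattices such that ‖x‖ ≤ ‖f(x)‖ ≤ C‖x‖ for all x ∈ A (f is an expansion and a C-embedding). Then there exists a norm |||·||| on X with (1/C)‖·‖ ≤ |||·||| ≤ ‖·‖, making (X, |||·|||) a Banach lattice with the same order, such that f : A → (X, |||·|||) is an isometric lattice embedding; its unit ball is the closed solid convex hull of f(B(A)) ∪ B(X). -/
open Metric

section Aux
variable {X : Type*} [NormedAddCommGroup X] [Lattice X] [HasSolidNorm X] [IsOrderedAddMonoid X] [NormedSpace ℝ X]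

lemma aux_pow2 : ∀ (k : ℕ) (y : X), 0 ≤ (2^k : ℕ) • y → 0 ≤ y := by
  intro k
  induction k with
  | zero => intro y h; simpa using h
  | succ k ih =>
      intro y h
      apply nsmul_two_semiclosed
      apply ih
      rw [smul_smul, mul_comm]
      rwa [pow_succ'] at h

lemma aux_smul_nonneg {c : ℝ} {x : X} (hc : 0 ≤ c) (hx : 0 ≤ x) : 0 ≤ c • x := by
  set d : ℕ → ℝ := fun n => (⌊c * 2^n⌋₊ : ℝ) / 2^n with hd
  have h2 : ∀ n : ℕ, (0:ℝ) < 2^n := fun n => by positivity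
  have hdn : ∀ n, 0 ≤ d n • x := by
    intro n
    apply aux_pow2 n
    have : (2^n : ℕ) • (d n • x) = (⌊c * 2^n⌋₊ : ℕ) • x := by
      rw [← Nat.cast_smul_eq_nsmul ℝ, ← Nat.cast_smul_eq_nsmul ℝ (⌊c * 2^n⌋₊), smul_smul, hd]
      push_cast
      rw [mul_div_cancel₀]
      exact (h2 n).ne'
    rw [this]
    exact nsmul_nonneg hx _
  have htend : Filter.Tendsto d Filter.atTop (nhds c) := by
    have hlow : ∀ n, c - (1/2)^n ≤ d n := by
      intro n
      rw [hd]
      simp only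
      rw [le_div_iff₀ (h2 n), sub_mul, one_div, inv_pow, inv_mul_cancel₀ (h2 n).ne']
      exact (Nat.sub_one_lt_floor (c * 2^n)).le
    have hhigh : ∀ n, d n ≤ c := by
      intro n
      rw [hd]
      simp only
      rw [div_le_iff₀ (h2 n)]
      exact Nat.floor_le (by positivity)
    have h1 : Filter.Tendsto (fun n : ℕ => c - (1/2)^n) Filter.atTop (nhds c) := by
      have := tendsto_pow_atTop_nhds_zero_of_lt_one (by norm_num : (0:ℝ) ≤ 1/2) (by norm_num)
      simpa using (tendsto_const_nhds (x := c)).sub this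
    exact tendsto_of_tendsto_of_tendsto_of_le_of_le h1 tendsto_const_nhds hlow hhigh
  have : Filter.Tendsto (fun n => d n • x) Filter.atTop (nhds (c • x)) :=
    htend.smul_const x
  exact isClosed_nonneg.mem_of_tendsto this (Filter.Eventually.of_forall hdn)

lemma aux_smul_mono {c : ℝ} {x y : X} (hc : 0 ≤ c) (h : x ≤ y) : c • x ≤ c • y := by
  have := aux_smul_nonneg hc (sub_nonneg.2 h)
  rw [smul_sub] at this
  exact sub_nonneg.1 this

lemma aux_smul_sup {c : ℝ} (hc : 0 < c) (x y : X) : c • (x ⊔ y) = (c • x) ⊔ (c • y) := by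
  let e : X ≃o X :=
    { toFun := fun z => c • z
      invFun := fun z => c⁻¹ • z
      left_inv := fun z => by
        show c⁻¹ • (c • z) = z
        rw [smul_smul, inv_mul_cancel₀ hc.ne', one_smul]
      right_inv := fun z => by
        show c • (c⁻¹ • z) = z
        rw [smul_smul, mul_inv_cancel₀ hc.ne', one_smul]
      map_rel_iff' := by
        intro a b
        simp only [Equiv.coe_fn_mk]
        constructor
        · intro h
          have := aux_smul_mono (inv_nonneg.2 hc.le) h
          rwa [smul_smul, smul_smul, inv_mul_cancel₀ hc.ne', one_smul, one_smul] at this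
        · exact fun h => aux_smul_mono hc.le h }
  exact e.map_sup x y

lemma aux_abs_smul (c : ℝ) (x : X) : |c • x| = |c| • |x| := by
  rcases lt_trichotomy c 0 with hc | hc | hc
  · have h0 : (0:ℝ) < -c := by linarith
    calc |c • x| = |(-c) • (-x)| := by rw [neg_smul_neg]
      _ = ((-c) • (-x)) ⊔ -((-c) • (-x)) := rfl
      _ = (-c) • ((-x) ⊔ -(-x)) := by rw [aux_smul_sup h0]; simp [smul_neg]
      _ = |c| • |x| := by
            rw [abs_of_neg hc]
            congr 1
            rw [neg_neg, sup_comm]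
            rfl
  · simp [hc]
  · show (c • x) ⊔ -(c • x) = |c| • (x ⊔ -x)
    rw [abs_of_pos hc, aux_smul_sup hc, smul_neg]

end Aux

/-- A set in a Banach lattice is solid if `|a| ≤ |b|` and `b ∈ S` imply `a ∈ S`. -/
def IsSolidSet {X : Type*} [Lattice X] [AddCommGroup X] (S : Set X) : Prop :=
  ∀ a b : X, |a| ≤ |b| → b ∈ S → a ∈ S

/-- The closed solid convex hull: the smallest closed solid convex set containing `S`. -/
def closedSolidConvexHull {X : Type*} [NormedAddCommGroup X] [Lattice X] [HasSolidNorm X] [IsOrderedAddMonoid X] [NormedSpace ℝ X]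
    (S : Set X) : Set X :=
  ⋂₀ {T : Set X | IsClosed T ∧ Convex ℝ T ∧ IsSolidSet T ∧ S ⊆ T}

set_option maxHeartbeats 1000000 in
/-- If `f : A → X` is an expansive lattice `C`-embedding of Banach lattices
(`‖a‖ ≤ ‖f a‖ ≤ C‖a‖`), then there is an equivalent lattice norm `N` on `X` with
`(1/C)‖·‖ ≤ N ≤ ‖·‖`, whose unit ball is the closed solid convex hull of
`f(B(A)) ∪ B(X)`, making `f` an isometric lattice embedding. -/
theorem stmt7 {A X : Type*}
    [NormedAddCommGroup A] [Lattice A] [HasSolidNorm A] [IsOrderedAddMonoid A] [NormedSpace ℝ A] [CompleteSpace A]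
    [NormedAddCommGroup X] [Lattice X] [HasSolidNorm X] [IsOrderedAddMonoid X] [NormedSpace ℝ X] [CompleteSpace X]
    {C : ℝ} (hC : 1 ≤ C)
    (f : A →ₗ[ℝ] X) (hinj : Function.Injective f)
    (hlat : ∀ a b : A, f (a ⊓ b) = f a ⊓ f b)
    (hexp : ∀ a : A, ‖a‖ ≤ ‖f a‖) (hbd : ∀ a : A, ‖f a‖ ≤ C * ‖a‖) :
    ∃ N : X → ℝ,
      (∀ x, 0 ≤ N x) ∧
      (∀ x, N x = 0 ↔ x = 0) ∧
      (∀ x y, N (x + y) ≤ N x + N y) ∧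
      (∀ (c : ℝ) (x : X), N (c • x) = |c| * N x) ∧
      (∀ x y : X, |x| ≤ |y| → N x ≤ N y) ∧
      (∀ x : X, (1 / C) * ‖x‖ ≤ N x ∧ N x ≤ ‖x‖) ∧
      (∀ a : A, N (f a) = ‖a‖) ∧
      {x : X | N x ≤ 1} =
        closedSolidConvexHull (f '' closedBall (0 : A) 1 ∪ closedBall (0 : X) 1) := by
  classical
  have hC0 : (0:ℝ) < C := lt_of_lt_of_le one_pos hC
  have hsup : ∀ a b : A, f (a ⊔ b) = f a ⊔ f b := by
    intro a b
    have h : a ⊔ b = -((-a) ⊓ (-b)) := by rw [neg_inf, neg_neg, neg_neg]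
    rw [h, map_neg, hlat, map_neg, map_neg, neg_inf, neg_neg, neg_neg]
  have habs : ∀ a : A, f |a| = |f a| := by
    intro a
    show f (a ⊔ -a) = (f a) ⊔ -(f a)
    rw [hsup, map_neg]
  set S : X → Set ℝ := fun x => {r | ∃ b : A, ∃ y : X, |x| ≤ |f b| + |y| ∧ r = ‖b‖ + ‖y‖}
    with hSdef
  have hne : ∀ x, (S x).Nonempty := fun x => ⟨‖(0:A)‖ + ‖x‖, 0, x, by simp, rfl⟩
  have hbdd : ∀ x, BddBelow (S x) := by
    intro x; refine ⟨0, ?_⟩; rintro r ⟨b, y, -, rfl⟩; positivity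
  set N : X → ℝ := fun x => sInf (S x) with hNdef
  have hNle : ∀ (x : X) (b : A) (y : X), |x| ≤ |f b| + |y| → N x ≤ ‖b‖ + ‖y‖ :=
    fun x b y h => csInf_le (hbdd x) ⟨b, y, h, rfl⟩
  have hN0 : ∀ x, 0 ≤ N x := fun x => le_csInf (hne x) (by rintro r ⟨b, y, -, rfl⟩; positivity)
  have hupper : ∀ x : X, N x ≤ ‖x‖ := by
    intro x
    have := hNle x 0 x (by simp)
    simpa using this
  have hNzero : N (0:X) = 0 := le_antisymm (by simpa using hupper 0) (hN0 0)
  have hlow : ∀ x : X, (1/C) * ‖x‖ ≤ N x := by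
    intro x
    apply le_csInf (hne x)
    rintro r ⟨b, y, hxy, rfl⟩
    have h1 : ‖x‖ ≤ C * (‖b‖ + ‖y‖) := by
      have h3 : ‖x‖ ≤ ‖|f b| + |y|‖ := by
        rw [← norm_abs_eq_norm x]
        apply norm_le_norm_of_abs_le_abs
        calc |(|x|)| = |x| := abs_abs x
          _ ≤ |f b| + |y| := hxy
          _ = |(|f b| + |y|)| :=
              (abs_of_nonneg (add_nonneg (abs_nonneg _) (abs_nonneg _))).symm
      have h4 : ‖|f b| + |y|‖ ≤ ‖f b‖ + ‖y‖ := by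
        calc ‖|f b| + |y|‖ ≤ ‖|f b|‖ + ‖|y|‖ := norm_add_le _ _
          _ = ‖f b‖ + ‖y‖ := by rw [norm_abs_eq_norm, norm_abs_eq_norm]
      have h5 := hbd b
      nlinarith [norm_nonneg y, norm_nonneg b]
    have h4 := mul_le_mul_of_nonneg_left h1 (le_of_lt (by positivity : (0:ℝ) < 1/C))
    calc (1/C) * ‖x‖ ≤ (1/C) * (C * (‖b‖ + ‖y‖)) := h4
      _ = ‖b‖ + ‖y‖ := by field_simp
  have Nkey : ∀ x u v : X, |x| ≤ |u| + |v| → N x ≤ N u + N v := by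
    intro x u v hx
    have key : ∀ r ∈ S u, ∀ q ∈ S v, N x ≤ r + q := by
      rintro r ⟨b1, y1, h1, rfl⟩ q ⟨b2, y2, h2, rfl⟩
      have hfb : |f (|b1| + |b2|)| = |f b1| + |f b2| := by
        rw [map_add, habs, habs]
        exact abs_of_nonneg (add_nonneg (abs_nonneg _) (abs_nonneg _))
      have hyy : |(|y1| + |y2|)| = |y1| + |y2| :=
        abs_of_nonneg (add_nonneg (abs_nonneg _) (abs_nonneg _))
      have hdom : |x| ≤ |f (|b1| + |b2|)| + |(|y1| + |y2|)| := by
        rw [hfb, hyy]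
        calc |x| ≤ |u| + |v| := hx
          _ ≤ (|f b1| + |y1|) + (|f b2| + |y2|) := add_le_add h1 h2
          _ = |f b1| + |f b2| + (|y1| + |y2|) := by abel
      have hle := hNle x _ _ hdom
      have e1 := norm_add_le |b1| |b2|
      have e2 := norm_add_le |y1| |y2|
      simp only [norm_abs_eq_norm] at e1 e2
      linarith
    have step1 : ∀ r ∈ S u, N x - r ≤ N v := fun r hr =>
      le_csInf (hne v) (fun q hq => by linarith [key r hr q hq])
    have step2 : N x - N v ≤ N u :=
      le_csInf (hne u) (fun r hr => by linarith [step1 r hr])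
    linarith
  have htri : ∀ x y : X, N (x + y) ≤ N x + N y := fun x y => Nkey _ _ _ (abs_add_le x y)
  have hmono : ∀ x y : X, |x| ≤ |y| → N x ≤ N y := by
    intro x y h
    have := Nkey x y 0 (by simpa using h)
    rw [hNzero] at this
    linarith
  have hsmul_le : ∀ (c : ℝ) (x : X), N (c • x) ≤ |c| * N x := by
    intro c x
    rcases eq_or_ne c 0 with rfl | hc
    · simp [hNzero]
    · have hc0 : 0 < |c| := abs_pos.2 hc
      have key : ∀ r ∈ S x, N (c • x) ≤ |c| * r := by
        rintro r ⟨b, y, hxy, rfl⟩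
        have hdom : |c • x| ≤ |f (c • b)| + |c • y| := by
          rw [map_smul, aux_abs_smul c (f b), aux_abs_smul c y, aux_abs_smul c x, ← smul_add]
          exact aux_smul_mono (abs_nonneg c) hxy
        have hle := hNle _ _ _ hdom
        calc N (c • x) ≤ ‖c • b‖ + ‖c • y‖ := hle
          _ = |c| * (‖b‖ + ‖y‖) := by
              rw [norm_smul, norm_smul, Real.norm_eq_abs, mul_add]
      have h1 : |c|⁻¹ * N (c • x) ≤ N x := by
        apply le_csInf (hne x)
        intro r hr
        rw [inv_mul_le_iff₀ hc0]
        exact key r hr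
      have h2 := mul_le_mul_of_nonneg_left h1 hc0.le
      rwa [← mul_assoc, mul_inv_cancel₀ hc0.ne', one_mul] at h2
  have hsmul : ∀ (c : ℝ) (x : X), N (c • x) = |c| * N x := by
    intro c x
    rcases eq_or_ne c 0 with rfl | hc
    · simp [hNzero]
    · refine le_antisymm (hsmul_le c x) ?_
      have h1 := hsmul_le c⁻¹ (c • x)
      rw [smul_smul, inv_mul_cancel₀ hc, one_smul, abs_inv] at h1
      have h2 := mul_le_mul_of_nonneg_left h1 (abs_nonneg c)
      rwa [← mul_assoc, mul_inv_cancel₀ (abs_ne_zero.2 hc), one_mul] at h2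
  have hzero : ∀ x : X, N x = 0 ↔ x = 0 := by
    intro x
    constructor
    · intro h
      have h1 := hlow x
      rw [h] at h1
      have h2 : (0:ℝ) < 1/C := by positivity
      have h3 : ‖x‖ ≤ 0 := by nlinarith [norm_nonneg x]
      have := le_antisymm h3 (norm_nonneg x)
      simpa using this
    · rintro rfl; exact hNzero
  have hNfa : ∀ a : A, N (f a) = ‖a‖ := by
    intro a
    refine le_antisymm ?_ ?_
    · have := hNle (f a) a 0 (by simp)
      simpa using this
    · apply le_csInf (hne _)
      rintro r ⟨b, y, hab, rfl⟩
      set d : A := |a| - |a| ⊓ |b| with hd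
      have hd0 : (0:A) ≤ d := sub_nonneg.2 inf_le_left
      have hfd : f d = |f a| - |f a| ⊓ |f b| := by
        rw [hd, map_sub, hlat, habs, habs]
      have hfd_le : f d ≤ |y| := by
        rw [hfd]
        have h1 : |f a| - |y| ≤ |f b| := sub_le_iff_le_add.2 hab
        have h2 : |f a| - |y| ≤ |f a| := sub_le_self _ (abs_nonneg y)
        have h3 : |f a| - |y| ≤ |f a| ⊓ |f b| := le_inf h2 h1
        exact sub_le_comm.1 h3
      have hnd : ‖d‖ ≤ ‖y‖ := by
        refine le_trans (hexp d) ?_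
        calc ‖f d‖ ≤ ‖|y|‖ := by
              apply norm_le_norm_of_abs_le_abs
              rw [abs_abs, ← habs, abs_of_nonneg hd0]
              exact hfd_le
          _ = ‖y‖ := norm_abs_eq_norm y
      have hinf : ‖|a| ⊓ |b|‖ ≤ ‖b‖ := by
        have h1 : |(|a| ⊓ |b|)| ≤ |(|b|)| := by
          rw [abs_abs, abs_of_nonneg (le_inf (abs_nonneg a) (abs_nonneg b))]
          exact inf_le_right
        calc ‖|a| ⊓ |b|‖ ≤ ‖|b|‖ := norm_le_norm_of_abs_le_abs h1
          _ = ‖b‖ := norm_abs_eq_norm b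
      have hsplit : |a| = |a| ⊓ |b| + d := by rw [hd]; abel
      calc ‖a‖ = ‖|a|‖ := (norm_abs_eq_norm a).symm
        _ = ‖|a| ⊓ |b| + d‖ := by rw [← hsplit]
        _ ≤ ‖|a| ⊓ |b|‖ + ‖d‖ := norm_add_le _ _
        _ ≤ ‖b‖ + ‖y‖ := add_le_add hinf hnd
  refine ⟨N, hN0, hzero, htri, hsmul, hmono, fun x => ⟨hlow x, hupper x⟩, hNfa, ?_⟩
  -- the unit ball equality
  have hball_mem : {x : X | N x ≤ 1} ∈
      {T : Set X | IsClosed T ∧ Convex ℝ T ∧ IsSolidSet T ∧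
        (f '' closedBall (0:A) 1 ∪ closedBall (0:X) 1) ⊆ T} := by
    refine ⟨?_, ?_, ?_, ?_⟩
    · have hcont : Continuous N := by
        apply LipschitzWith.continuous (K := 1)
        apply LipschitzWith.of_dist_le_mul
        intro x y
        rw [NNReal.coe_one, one_mul, Real.dist_eq, dist_eq_norm, abs_sub_le_iff]
        have hxy1 : |x| ≤ |y| + |x - y| := by
          calc |x| = |y + (x - y)| := by congr 1; abel
            _ ≤ |y| + |x - y| := abs_add_le _ _
        have hyx1 : |y| ≤ |x| + |y - x| := by
          calc |y| = |x + (y - x)| := by congr 1; abel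
            _ ≤ |x| + |y - x| := abs_add_le _ _
        constructor
        · have := Nkey x y (x - y) hxy1
          have h2 := hupper (x - y)
          linarith
        · have := Nkey y x (y - x) hyx1
          have h2 := hupper (y - x)
          rw [norm_sub_rev] at h2
          linarith
      exact IsClosed.preimage hcont isClosed_Iic
    · intro x hx y hy a b ha hb hab
      simp only [Set.mem_setOf_eq] at hx hy ⊢
      calc N (a • x + b • y) ≤ N (a • x) + N (b • y) := htri _ _
        _ = |a| * N x + |b| * N y := by rw [hsmul, hsmul]
        _ ≤ a * 1 + b * 1 := by
            rw [abs_of_nonneg ha, abs_of_nonneg hb]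
            exact add_le_add (mul_le_mul_of_nonneg_left hx ha)
              (mul_le_mul_of_nonneg_left hy hb)
        _ = 1 := by linarith
    · intro p q hpq hq
      exact le_trans (hmono p q hpq) hq
    · rintro z (⟨a, ha, rfl⟩ | hz)
      · rw [Set.mem_setOf_eq, hNfa]
        exact mem_closedBall_zero_iff.1 ha
      · exact le_trans (hupper z) (mem_closedBall_zero_iff.1 hz)
  apply Set.Subset.antisymm
  · -- unit ball ⊆ hull
    intro x hx
    rw [closedSolidConvexHull, Set.mem_sInter]
    intro T hT
    obtain ⟨hTc, hTconv, hTsolid, hTsub⟩ := hT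
    have hzero_mem : (0:X) ∈ T := hTsub (Or.inr (mem_closedBall_self zero_le_one))
    have hcombo : ∀ (s t : ℝ) (p q : X), p ∈ T → q ∈ T → 0 ≤ s → 0 ≤ t → s + t ≤ 1 →
        s • p + t • q ∈ T := by
      intro s t p q hp hq hs ht hst
      rcases eq_or_lt_of_le (add_nonneg hs ht) with h | hu
      · have hs0 : s = 0 := by linarith
        have ht0 : t = 0 := by linarith
        simpa [hs0, ht0] using hzero_mem
      · have hw : (s/(s+t)) • p + (t/(s+t)) • q ∈ T :=
          hTconv hp hq (by positivity) (by positivity) (by field_simp)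
        have heq : s • p + t • q = (s+t) • ((s/(s+t)) • p + (t/(s+t)) • q) := by
          rw [smul_add, smul_smul, smul_smul]
          congr 2 <;> field_simp
        rw [heq]
        have h2 := hTconv hw hzero_mem hu.le (by linarith : (0:ℝ) ≤ 1 - (s+t)) (by ring)
        simpa using h2
    have hmem : ∀ ε : ℝ, 0 < ε → (1+ε)⁻¹ • x ∈ T := by
      intro ε hε
      have h1 : N x < 1 + ε := lt_of_le_of_lt hx (by linarith)
      obtain ⟨r, hrS, hr⟩ := exists_lt_of_csInf_lt (hne x) h1
      obtain ⟨b, y, hxy, rfl⟩ := hrS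
      have h1ε : (0:ℝ) < 1 + ε := by linarith
      have hp1T : ∀ hb : b ≠ 0, ‖b‖⁻¹ • |f b| ∈ T := by
        intro hb
        have hb0 : (0:ℝ) < ‖b‖ := norm_pos_iff.2 hb
        have hmemA : (‖b‖⁻¹ • b) ∈ closedBall (0:A) 1 := by
          rw [mem_closedBall_zero_iff, norm_smul, Real.norm_eq_abs,
            abs_of_nonneg (by positivity : (0:ℝ) ≤ ‖b‖⁻¹), inv_mul_cancel₀ hb0.ne']
        have hfT : f (‖b‖⁻¹ • b) ∈ T := hTsub (Or.inl ⟨_, hmemA, rfl⟩)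
        apply hTsolid _ _ ?_ hfT
        rw [map_smul, aux_abs_smul, aux_abs_smul, abs_abs]
      have hp2T : ∀ hy : y ≠ 0, ‖y‖⁻¹ • |y| ∈ T := by
        intro hy
        have hy0 : (0:ℝ) < ‖y‖ := norm_pos_iff.2 hy
        have hmemX : (‖y‖⁻¹ • y) ∈ closedBall (0:X) 1 := by
          rw [mem_closedBall_zero_iff, norm_smul, Real.norm_eq_abs,
            abs_of_nonneg (by positivity : (0:ℝ) ≤ ‖y‖⁻¹), inv_mul_cancel₀ hy0.ne']
        have hyT : (‖y‖⁻¹ • y) ∈ T := hTsub (Or.inr hmemX)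
        apply hTsolid _ _ ?_ hyT
        rw [aux_abs_smul, aux_abs_smul, abs_abs]
      set p1 : X := if b = 0 then 0 else ‖b‖⁻¹ • |f b| with hp1def
      set p2 : X := if y = 0 then 0 else ‖y‖⁻¹ • |y| with hp2def
      have hp1 : p1 ∈ T := by
        rw [hp1def]; split_ifs with h
        · exact hzero_mem
        · exact hp1T h
      have hp2 : p2 ∈ T := by
        rw [hp2def]; split_ifs with h
        · exact hzero_mem
        · exact hp2T h
      have e1 : (‖b‖/(1+ε)) • p1 = (1+ε)⁻¹ • |f b| := by
        rw [hp1def]; split_ifs with h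
        · simp [h]
        · have hb0 : (0:ℝ) < ‖b‖ := norm_pos_iff.2 h
          rw [smul_smul]
          congr 1
          field_simp
      have e2 : (‖y‖/(1+ε)) • p2 = (1+ε)⁻¹ • |y| := by
        rw [hp2def]; split_ifs with h
        · simp [h]
        · have hy0 : (0:ℝ) < ‖y‖ := norm_pos_iff.2 h
          rw [smul_smul]
          congr 1
          field_simp
      have hsum : (‖b‖/(1+ε)) + (‖y‖/(1+ε)) ≤ 1 := by
        rw [← add_div, div_le_one h1ε]
        linarith
      have hcomboT : (1+ε)⁻¹ • (|f b| + |y|) ∈ T := by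
        have h3 := hcombo _ _ _ _ hp1 hp2 (by positivity) (by positivity) hsum
        rw [e1, e2, ← smul_add] at h3
        exact h3
      apply hTsolid _ _ ?_ hcomboT
      have habs2 : |(1+ε)⁻¹ • (|f b| + |y|)| = (1+ε)⁻¹ • (|f b| + |y|) :=
        abs_of_nonneg (aux_smul_nonneg (by positivity)
          (add_nonneg (abs_nonneg _) (abs_nonneg _)))
      rw [habs2, aux_abs_smul, abs_of_nonneg (by positivity : (0:ℝ) ≤ (1+ε)⁻¹)]
      exact aux_smul_mono (by positivity) hxy
    have htend : Filter.Tendsto (fun n : ℕ => (1 + 1/(n+1 : ℝ))⁻¹ • x)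
        Filter.atTop (nhds x) := by
      have h0 : Filter.Tendsto (fun n : ℕ => 1/(n+1 : ℝ)) Filter.atTop (nhds 0) :=
        tendsto_one_div_add_atTop_nhds_zero_nat
      have h1 : Filter.Tendsto (fun n : ℕ => 1 + 1/(n+1 : ℝ)) Filter.atTop (nhds 1) := by
        simpa using (tendsto_const_nhds (x := (1:ℝ))).add h0
      have h2 := h1.inv₀ (by norm_num)
      simp only [inv_one] at h2
      have := h2.smul_const x
      simpa using this
    exact hTc.mem_of_tendsto htend
      (Filter.Eventually.of_forall fun n => hmem _ (by positivity))
  · -- hull ⊆ unit ball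
    exact Set.sInter_subset_of_mem hball_mem
end

section
/- Every finitely branchable Banach lattice is separable, and is the closure of an increasing union of finite dimensional sublattices. -/
open TopologicalSpace

/-- A Banach lattice is finitely branchable if it admits a linearly dense finitely
branching tree of positive elements: the children of each node are pairwise disjoint and
sum to their parent. -/
def FinitelyBranchable (E : Type*) [NormedAddCommGroup E] [Lattice E] [HasSolidNorm E] [IsOrderedAddMonoid E] [NormedSpace ℝ E] : Prop :=
  ∃ (A : ℕ → Type) (_ : ∀ n, Fintype (A n)) (_ : ∀ n, Nonempty (A n))
    (x : (Σ k : ℕ, ∀ i : Fin k, A i) → E),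
    (∀ σ, 0 ≤ x σ) ∧
    (∀ (k : ℕ) (σ : ∀ i : Fin k, A i),
      x ⟨k, σ⟩ = ∑ b : A k, x ⟨k + 1, Fin.snoc σ b⟩) ∧
    (∀ (k : ℕ) (σ : ∀ i : Fin k, A i) (b b' : A k), b ≠ b' →
      x ⟨k + 1, Fin.snoc σ b⟩ ⊓ x ⟨k + 1, Fin.snoc σ b'⟩ = 0) ∧
    Dense (Submodule.span ℝ (Set.range x) : Set E)

section Aux

variable {E : Type*} [NormedAddCommGroup E] [Lattice E] [HasSolidNorm E] [IsOrderedAddMonoid E] [NormedSpace ℝ E]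

/-- Riesz decomposition type inequality. -/
lemma aux_inf_add_le {a b c : E} (ha : 0 ≤ a) (hb : 0 ≤ b) (hc : 0 ≤ c) :
    a ⊓ (b + c) ≤ a ⊓ b + a ⊓ c := by
  rw [← sub_le_iff_le_add']
  have h : a ⊓ (b + c) - a ⊓ b = (a ⊓ (b + c) - a) ⊔ (a ⊓ (b + c) - b) := sub_inf _ _ _
  rw [h]
  apply sup_le
  · exact le_trans (by simpa using (inf_le_left : a ⊓ (b + c) ≤ a)) (le_inf ha hc)
  · refine le_inf ?_ ?_
    · have h1 : a ⊓ (b + c) ≤ b + a := le_trans inf_le_left (le_add_of_nonneg_left hb)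
      exact sub_le_iff_le_add'.2 h1
    · exact sub_le_iff_le_add'.2 (inf_le_right : a ⊓ (b + c) ≤ b + c)

lemma aux_disj_add {p q r : E} (hp : 0 ≤ p) (hq : 0 ≤ q) (hr : 0 ≤ r)
    (h1 : p ⊓ r = 0) (h2 : q ⊓ r = 0) : (p + q) ⊓ r = 0 := by
  refine le_antisymm ?_ (le_inf (add_nonneg hp hq) hr)
  calc (p + q) ⊓ r = r ⊓ (p + q) := inf_comm _ _
    _ ≤ r ⊓ p + r ⊓ q := aux_inf_add_le hr hp hq
    _ = 0 := by rw [inf_comm r p, inf_comm r q, h1, h2, add_zero]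

lemma aux_disj_sum {ι : Type*} {s : Finset ι} {f : ι → E} {r : E}
    (hf : ∀ i ∈ s, 0 ≤ f i) (hr : 0 ≤ r) (h : ∀ i ∈ s, f i ⊓ r = 0) :
    (∑ i ∈ s, f i) ⊓ r = 0 := by
  classical
  induction s using Finset.cons_induction with
  | empty => simpa using inf_eq_left.2 hr
  | cons a s ha ih =>
    rw [Finset.sum_cons]
    exact aux_disj_add (hf a (Finset.mem_cons_self a s))
      (Finset.sum_nonneg fun i hi => hf i (Finset.mem_cons_of_mem hi)) hr
      (h a (Finset.mem_cons_self a s))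
      (ih (fun i hi => hf i (Finset.mem_cons_of_mem hi))
        (fun i hi => h i (Finset.mem_cons_of_mem hi)))

lemma aux_abs_sub_of_disj {a b : E} (ha : 0 ≤ a) (hb : 0 ≤ b) (h : a ⊓ b = 0) :
    |a - b| = a + b := by
  have h1 : (b ⊔ a) - (b ⊓ a) = |a - b| := sup_sub_inf_eq_abs_sub b a
  have h2 : (b ⊓ a) + (b ⊔ a) = b + a := inf_add_sup b a
  rw [inf_comm, h, sub_zero] at h1
  rw [inf_comm, h, zero_add] at h2
  rw [← h1, h2, add_comm]

lemma aux_abs_add_of_disj {u v : E} (h : |u| ⊓ |v| = 0) : |u + v| = |u| + |v| := by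
  have hcross : ∀ p q : E, 0 ≤ p → 0 ≤ q → p ≤ |u| → q ≤ |v| → p ⊓ q = 0 := fun p q hp hq hpu hqv =>
    le_antisymm (le_trans (inf_le_inf hpu hqv) h.le) (le_inf hp hq)
  have hup : u⁺ ≤ |u| := by rw [posPart_def]; exact sup_le (le_abs_self u) (abs_nonneg u)
  have hun : u⁻ ≤ |u| := by rw [negPart_def]; exact sup_le (neg_le_abs u) (abs_nonneg u)
  have hvp : v⁺ ≤ |v| := by rw [posPart_def]; exact sup_le (le_abs_self v) (abs_nonneg v)
  have hvn : v⁻ ≤ |v| := by rw [negPart_def]; exact sup_le (neg_le_abs v) (abs_nonneg v)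
  have hXY : (u⁺ + v⁺) ⊓ (u⁻ + v⁻) = 0 := by
    have h1 : u⁺ ⊓ (u⁻ + v⁻) = 0 := by
      rw [inf_comm]
      exact aux_disj_add (negPart_nonneg u) (negPart_nonneg v) (posPart_nonneg u)
        (by rw [inf_comm]; exact posPart_inf_negPart_eq_zero u)
        (by rw [inf_comm]; exact hcross u⁺ v⁻ (posPart_nonneg u) (negPart_nonneg v) hup hvn)
    have h2 : v⁺ ⊓ (u⁻ + v⁻) = 0 := by
      rw [inf_comm]
      exact aux_disj_add (negPart_nonneg u) (negPart_nonneg v) (posPart_nonneg v)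
        (hcross u⁻ v⁺ (negPart_nonneg u) (posPart_nonneg v) hun hvp)
        (by rw [inf_comm]; exact posPart_inf_negPart_eq_zero v)
    exact aux_disj_add (posPart_nonneg u) (posPart_nonneg v)
      (add_nonneg (negPart_nonneg u) (negPart_nonneg v)) h1 h2
  have huv : u + v = (u⁺ + v⁺) - (u⁻ + v⁻) := by
    have h3 : (u⁺ + v⁺) - (u⁻ + v⁻) = (u⁺ - u⁻) + (v⁺ - v⁻) := by abel
    rw [h3, posPart_sub_negPart, posPart_sub_negPart]
  rw [huv, aux_abs_sub_of_disj (add_nonneg (posPart_nonneg u) (posPart_nonneg v))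
    (add_nonneg (negPart_nonneg u) (negPart_nonneg v)) hXY,
    ← posPart_add_negPart u, ← posPart_add_negPart v]
  abel

lemma aux_nsmul_semiclosed : ∀ (k : ℕ) (a : E), 0 ≤ 2 ^ k • a → 0 ≤ a := by
  intro k
  induction k with
  | zero => intro a h; simpa using h
  | succ k ih =>
    intro a h
    have h' : (2 : ℕ) ^ (k + 1) • a = 2 ^ k • (2 • a) := by
      rw [← mul_smul, ← pow_succ]
    rw [h'] at h
    exact nsmul_two_semiclosed (ih _ h)

lemma aux_smul_nonneg_s13 {r : ℝ} (hr : 0 ≤ r) {x : E} (hx : 0 ≤ x) : 0 ≤ r • x := by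
  -- dyadic approximation
  have hdyadic : ∀ (m k : ℕ), 0 ≤ ((m : ℝ) / 2 ^ k) • x := by
    intro m k
    apply aux_nsmul_semiclosed k
    have : (2 : ℕ) ^ k • (((m : ℝ) / 2 ^ k) • x) = m • x := by
      rw [← Nat.cast_smul_eq_nsmul ℝ ((2:ℕ)^k), smul_smul, ← Nat.cast_smul_eq_nsmul ℝ m]
      congr 1
      push_cast
      field_simp
    rw [this]
    exact nsmul_nonneg hx m
  set s : ℕ → ℝ := fun k => (⌊r * 2 ^ k⌋₊ : ℝ) / 2 ^ k with hs
  have hmem : ∀ k, 0 ≤ s k • x := fun k => hdyadic _ _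
  have hle : ∀ k, r - (2 ^ k)⁻¹ ≤ s k := by
    intro k
    rw [hs, sub_le_iff_le_add, div_add' _ _ _ (by positivity)]
    rw [le_div_iff₀ (by positivity)]
    have := Nat.lt_floor_add_one (r * 2 ^ k)
    have h2 : (2:ℝ)^k * (2^k)⁻¹ = 1 := by field_simp
    nlinarith [this]
  have hge : ∀ k, s k ≤ r := by
    intro k
    rw [hs, div_le_iff₀ (by positivity)]
    exact Nat.floor_le (by positivity)
  have htend : Filter.Tendsto s Filter.atTop (nhds r) := by
    have h0 : Filter.Tendsto (fun k : ℕ => r - (2 ^ k)⁻¹) Filter.atTop (nhds r) := by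
      have : Filter.Tendsto (fun k : ℕ => ((2:ℝ) ^ k)⁻¹) Filter.atTop (nhds 0) := by
        simp_rw [← inv_pow]
        exact tendsto_pow_atTop_nhds_zero_of_lt_one (by norm_num) (by norm_num)
      simpa using Filter.Tendsto.sub tendsto_const_nhds this
    exact tendsto_of_tendsto_of_tendsto_of_le_of_le h0 tendsto_const_nhds hle hge
  have htend2 : Filter.Tendsto (fun k => s k • x) Filter.atTop (nhds (r • x)) :=
    htend.smul_const x
  have := isClosed_nonneg (α := E)
  exact this.mem_of_tendsto htend2 (Filter.Eventually.of_forall hmem)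

lemma aux_smul_le_smul {r t : ℝ} (h : r ≤ t) {x : E} (hx : 0 ≤ x) : r • x ≤ t • x := by
  rw [← sub_nonneg, ← sub_smul]
  exact aux_smul_nonneg_s13 (by linarith) hx

lemma aux_smul_mono_s13 {r : ℝ} (hr : 0 ≤ r) {a b : E} (h : a ≤ b) : r • a ≤ r • b := by
  rw [← sub_nonneg, ← smul_sub]
  exact aux_smul_nonneg_s13 hr (by rwa [sub_nonneg])

lemma aux_smul_inf {r : ℝ} (hr : 0 < r) (a b : E) : r • (a ⊓ b) = (r • a) ⊓ (r • b) := by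
  refine le_antisymm (le_inf (aux_smul_mono_s13 hr.le inf_le_left)
    (aux_smul_mono_s13 hr.le inf_le_right)) ?_
  have h1 : r⁻¹ • ((r • a) ⊓ (r • b)) ≤ a ⊓ b := by
    refine le_inf ?_ ?_
    · have := aux_smul_mono_s13 (inv_nonneg.2 hr.le) (inf_le_left : (r • a) ⊓ (r • b) ≤ r • a)
      rwa [inv_smul_smul₀ hr.ne'] at this
    · have := aux_smul_mono_s13 (inv_nonneg.2 hr.le) (inf_le_right : (r • a) ⊓ (r • b) ≤ r • b)
      rwa [inv_smul_smul₀ hr.ne'] at this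
  have h2 := aux_smul_mono_s13 hr.le h1
  rwa [smul_inv_smul₀ hr.ne'] at h2

lemma aux_disj_smul {a b : E} (ha : 0 ≤ a) (hb : 0 ≤ b) (h : a ⊓ b = 0)
    {t u : ℝ} (ht : 0 ≤ t) (hu : 0 ≤ u) : (t • a) ⊓ (u • b) = 0 := by
  set M : ℝ := max t u + 1 with hM
  have hM0 : 0 < M := by positivity
  refine le_antisymm ?_ (le_inf (aux_smul_nonneg_s13 ht ha) (aux_smul_nonneg_s13 hu hb))
  calc (t • a) ⊓ (u • b) ≤ (M • a) ⊓ (M • b) :=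
        inf_le_inf (aux_smul_le_smul (by simp [hM]; linarith [le_max_left t u]) ha)
          (aux_smul_le_smul (by simp [hM]; linarith [le_max_right t u]) hb)
    _ = M • (a ⊓ b) := (aux_smul_inf hM0 a b).symm
    _ = 0 := by rw [h, smul_zero]

lemma aux_abs_smul_s13 (r : ℝ) {x : E} (hx : 0 ≤ x) : |r • x| = |r| • x := by
  rcases le_total 0 r with hr | hr
  · rw [abs_of_nonneg (aux_smul_nonneg_s13 hr hx), abs_of_nonneg hr]
  · have h1 : 0 ≤ (-r) • x := aux_smul_nonneg_s13 (by linarith) hx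
    rw [neg_smul] at h1
    rw [abs_of_nonpos (neg_nonneg.1 h1), abs_of_nonpos hr, neg_smul]

lemma aux_abs_sum {ι : Type*} (s : Finset ι) (e : ι → E) (he : ∀ i, 0 ≤ e i)
    (hd : ∀ i ∈ s, ∀ j ∈ s, i ≠ j → e i ⊓ e j = 0) (c : ι → ℝ) :
    |∑ i ∈ s, c i • e i| = ∑ i ∈ s, |c i| • e i := by
  classical
  induction s using Finset.cons_induction with
  | empty => simp
  | cons a s ha ih =>
    rw [Finset.sum_cons, Finset.sum_cons]
    have hrest : |∑ i ∈ s, c i • e i| = ∑ i ∈ s, |c i| • e i :=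
      ih fun i hi j hj hij => hd i (Finset.mem_cons_of_mem hi) j (Finset.mem_cons_of_mem hj) hij
    have hdisj : |c a • e a| ⊓ |∑ i ∈ s, c i • e i| = 0 := by
      rw [aux_abs_smul_s13 _ (he a), hrest, inf_comm]
      refine aux_disj_sum (fun i _ => aux_smul_nonneg_s13 (abs_nonneg _) (he i))
        (aux_smul_nonneg_s13 (abs_nonneg _) (he a)) (fun i hi => ?_)
      exact aux_disj_smul (he i) (he a)
        (hd i (Finset.mem_cons_of_mem hi) a (Finset.mem_cons_self a s)
          (fun hia => ha (hia ▸ hi)))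
        (abs_nonneg _) (abs_nonneg _)
    rw [aux_abs_add_of_disj hdisj, aux_abs_smul_s13 _ (he a), hrest]

end Aux

/-- Every finitely branchable Banach lattice is separable and is the closure of an
increasing union of finite dimensional sublattices. -/
theorem stmt13 {E : Type*} [NormedAddCommGroup E] [Lattice E] [HasSolidNorm E] [IsOrderedAddMonoid E] [NormedSpace ℝ E] [CompleteSpace E]
    (hE : FinitelyBranchable E) :
    SeparableSpace E ∧
    ∃ F : ℕ → Submodule ℝ E,
      Monotone F ∧
      (∀ n, FiniteDimensional ℝ (F n)) ∧
      (∀ n, ∀ x y : E, x ∈ F n → y ∈ F n → x ⊓ y ∈ F n) ∧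
      (∀ n, ∀ x y : E, x ∈ F n → y ∈ F n → x ⊔ y ∈ F n) ∧
      Dense (⋃ n, (F n : Set E)) := by
  classical
  obtain ⟨A, hA, hNe, x, hpos, hsum, hdisj, hdense⟩ := hE
  letI : ∀ n, Fintype (A n) := hA
  set F : ℕ → Submodule ℝ E :=
    fun n => Submodule.span ℝ (Set.range (fun σ : (∀ i : Fin n, A i) => x ⟨n, σ⟩)) with hF
  -- children are below their parents
  have child_le : ∀ (k : ℕ) (σ : ∀ i : Fin k, A i) (b : A k),
      x ⟨k + 1, Fin.snoc σ b⟩ ≤ x ⟨k, σ⟩ := by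
    intro k σ b
    rw [hsum k σ]
    exact Finset.single_le_sum (f := fun b' => x ⟨k + 1, Fin.snoc σ b'⟩)
      (fun b' _ => hpos _) (Finset.mem_univ b)
  -- distinct nodes at the same level are disjoint
  have level_disj : ∀ (n : ℕ) (σ τ : ∀ i : Fin n, A i), σ ≠ τ →
      x ⟨n, σ⟩ ⊓ x ⟨n, τ⟩ = 0 := by
    intro n
    induction n with
    | zero => intro σ τ h; exact absurd (funext fun i => i.elim0) h
    | succ n ih =>
      intro σ τ hne
      have hσ : Fin.snoc (Fin.init σ) (σ (Fin.last n)) = σ := Fin.snoc_init_self σ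
      have hτ : Fin.snoc (Fin.init τ) (τ (Fin.last n)) = τ := Fin.snoc_init_self τ
      by_cases h' : Fin.init σ = Fin.init τ
      · have hb : σ (Fin.last n) ≠ τ (Fin.last n) := by
          intro hb
          exact hne (by rw [← hσ, ← hτ, h', hb])
        have := hdisj n (Fin.init σ) (σ (Fin.last n)) (τ (Fin.last n)) hb
        rw [hσ] at this
        rw [h'] at this
        rwa [hτ] at this
      · refine le_antisymm ?_ (le_inf (hpos _) (hpos _))
        have hc1 : x ⟨n + 1, σ⟩ ≤ x ⟨n, Fin.init σ⟩ := by
          have := child_le n (Fin.init σ) (σ (Fin.last n)); rwa [hσ] at this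
        have hc2 : x ⟨n + 1, τ⟩ ≤ x ⟨n, Fin.init τ⟩ := by
          have := child_le n (Fin.init τ) (τ (Fin.last n)); rwa [hτ] at this
        calc x ⟨n + 1, σ⟩ ⊓ x ⟨n + 1, τ⟩ ≤ x ⟨n, Fin.init σ⟩ ⊓ x ⟨n, Fin.init τ⟩ :=
              inf_le_inf hc1 hc2
          _ = 0 := ih _ _ h'
  -- generators of `F n` belong to `F n`
  have hgen : ∀ (n : ℕ) (σ : ∀ i : Fin n, A i), x ⟨n, σ⟩ ∈ F n := fun n σ =>
    Submodule.subset_span ⟨σ, rfl⟩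
  -- monotonicity
  have hmono : Monotone F := by
    apply monotone_nat_of_le_succ
    intro n
    rw [hF]
    apply Submodule.span_le.2
    rintro _ ⟨σ, rfl⟩
    have hmem : x ⟨n, σ⟩ ∈ F (n + 1) := by
      rw [hsum n σ]
      exact Submodule.sum_mem _ fun b _ => hgen (n + 1) (Fin.snoc σ b)
    exact hmem
  -- |z| stays in F n
  have habs : ∀ (n : ℕ) (z : E), z ∈ F n → |z| ∈ F n := by
    intro n z hz
    obtain ⟨c, rfl⟩ := Submodule.mem_span_range_iff_exists_fun ℝ |>.1 hz
    rw [aux_abs_sum Finset.univ _ (fun σ => hpos _)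
      (fun σ _ τ _ hστ => level_disj n σ τ hστ) c]
    exact Submodule.sum_mem _ fun σ _ =>
      Submodule.smul_mem _ _ (hgen n σ)
  -- lattice operations
  have hinf : ∀ (n : ℕ) (a b : E), a ∈ F n → b ∈ F n → a ⊓ b ∈ F n := by
    intro n a b hax hbx
    have h2 : 2 • (a ⊓ b) = a + b - |b - a| := two_nsmul_inf_eq_add_sub_abs_sub a b
    have key : a ⊓ b = (2⁻¹ : ℝ) • (a + b - |b - a|) := by
      calc a ⊓ b = (2⁻¹ : ℝ) • ((2 : ℝ) • (a ⊓ b)) := by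
            rw [smul_smul]; norm_num
        _ = (2⁻¹ : ℝ) • (a + b - |b - a|) := by
            rw [← h2]
            congr 1
            rw [two_smul, two_nsmul]
    rw [key]
    exact Submodule.smul_mem _ _
      (Submodule.sub_mem _ (Submodule.add_mem _ hax hbx) (habs n _ (Submodule.sub_mem _ hbx hax)))
  have hsup : ∀ (n : ℕ) (a b : E), a ∈ F n → b ∈ F n → a ⊔ b ∈ F n := by
    intro n a b hax hbx
    have h2 : 2 • (a ⊔ b) = a + b + |b - a| := two_nsmul_sup_eq_add_add_abs_sub a b
    have key : a ⊔ b = (2⁻¹ : ℝ) • (a + b + |b - a|) := by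
      calc a ⊔ b = (2⁻¹ : ℝ) • ((2 : ℝ) • (a ⊔ b)) := by
            rw [smul_smul]; norm_num
        _ = (2⁻¹ : ℝ) • (a + b + |b - a|) := by
            rw [← h2]
            congr 1
            rw [two_smul, two_nsmul]
    rw [key]
    exact Submodule.smul_mem _ _
      (Submodule.add_mem _ (Submodule.add_mem _ hax hbx) (habs n _ (Submodule.sub_mem _ hbx hax)))
  -- the union is dense
  have hspan_le : Submodule.span ℝ (Set.range x) ≤ ⨆ n, F n := by
    apply Submodule.span_le.2
    rintro _ ⟨⟨k, σ⟩, rfl⟩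
    exact Submodule.mem_iSup_of_mem k (hgen k σ)
  have hUnion : ((⨆ n, F n : Submodule ℝ E) : Set E) = ⋃ n, (F n : Set E) :=
    Submodule.coe_iSup_of_directed F (hmono.directed_le)
  have hsub : (Submodule.span ℝ (Set.range x) : Set E) ⊆ ⋃ n, (F n : Set E) := by
    rw [← hUnion]; exact hspan_le
  have hdense' : Dense (⋃ n, (F n : Set E)) := hdense.mono hsub
  -- separability
  haveI : Countable ((k : ℕ) × ((i : Fin k) → A i)) := by
    haveI : ∀ k : ℕ, Countable ((i : Fin k) → A i) := fun k => Finite.to_countable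
    infer_instance
  have hsep : IsSeparable (Submodule.span ℝ (Set.range x) : Set E) :=
    (Set.countable_range x).isSeparable.span
  obtain ⟨c, hc, hcs⟩ := hsep
  refine ⟨⟨⟨c, hc, ?_⟩⟩, F, hmono, ?_, hinf, hsup, hdense'⟩
  · exact (hdense.mono hcs).of_closure
  · intro n
    exact FiniteDimensional.span_of_finite ℝ (Set.finite_range _)
end

section
/- Let F be a finite dimensional Banach lattice with atoms e₁,…,e_m and fⱼ : F → ℓ∞^N(ℓ₁^M) (j = 1, 2) two C-isometric lattice embeddings with C ≥ 1. Writing A(l,i) (resp. B(l,i)) for the total mass of f₁(e_i) (resp. f₂(e_i)) in row l, each row vector A(l) ∈ ℝ^m lies in C² times the solid convex hull of the row vectors {B(k) : 1 ≤ k ≤ N}; in particular, if both f_j are isometric embeddings, the solid convex hulls of the two sets of row vectors coincide. -/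
open Pointwise
/-- The norm of `ℓ∞^N(ℓ₁^M)`: max over rows of the `ℓ₁`-norms of the rows. -/
noncomputable def linfl1Norm {N M : ℕ} (v : Fin N → Fin M → ℝ) : ℝ :=
  ⨆ k, ∑ j, |v k j|

/-- The solid convex hull of a set in `ℝ^m` (with the coordinatewise order): the smallest
convex set containing `S` that is solid. -/
def solidConvexHull {m : ℕ} (S : Set (Fin m → ℝ)) : Set (Fin m → ℝ) :=
  ⋂₀ {T : Set (Fin m → ℝ) | Convex ℝ T ∧ (∀ a b : Fin m → ℝ, |a| ≤ |b| → b ∈ T → a ∈ T) ∧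
      S ⊆ T}


lemma hull_nonneg {m : ℕ} {S : Set (Fin m → ℝ)} (hS : ∀ w ∈ S, 0 ≤ w) :
    ∀ b ∈ convexHull ℝ S, 0 ≤ b := by
  intro b hb
  have : convexHull ℝ S ⊆ Set.Ici (0 : Fin m → ℝ) :=
    convexHull_min (fun w hw => hS w hw) (convex_Ici _)
  exact this hb

/-- key Farkas-type lemma -/
lemma mem_smul_solid {m N : ℕ} (v : Fin m → ℝ) (B : Fin N → Fin m → ℝ)
    [Nonempty (Fin N)] (hv : 0 ≤ v) (hB : ∀ k, 0 ≤ B k) {c : ℝ} (hc : 0 < c)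
    (h : ∀ t : Fin m → ℝ, 0 ≤ t → ∑ i, t i * v i ≤ c * ⨆ k, ∑ i, t i * B k i) :
    v ∈ c • solidConvexHull (Set.range B) := by
  rw [Set.mem_smul_set_iff_inv_smul_mem₀ hc.ne']
  -- find b in convex hull dominating c⁻¹ • v
  have key : ∃ b ∈ convexHull ℝ (Set.range B), c⁻¹ • v ≤ b := by
    by_contra hcon
    push_neg at hcon
    set D : Set (Fin m → ℝ) := convexHull ℝ (Set.range B) + {y | y ≤ 0} with hD
    have hmemD : ∀ y, y ∈ D ↔ ∃ b ∈ convexHull ℝ (Set.range B), y ≤ b := by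
      intro y
      constructor
      · rintro ⟨a, ha, z, hz, rfl⟩
        exact ⟨a, ha, by simpa using add_le_add_left (hz : z ≤ 0) a⟩
      · rintro ⟨b, hb, hyb⟩
        refine ⟨b, hb, y - b, by simpa [sub_nonpos] using hyb, ?_⟩
        funext j; simp
    have hDconv : Convex ℝ D :=
      (convex_convexHull ℝ _).add (convex_Iic (0 : Fin m → ℝ))
    have hDclosed : IsClosed D := by
      apply IsClosed.add_left_of_isCompact
      · exact isClosed_Iic
      · exact (Set.finite_range B).isCompact_convexHull ℝ
    have hnot : c⁻¹ • v ∉ D := by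
      rw [hmemD]
      rintro ⟨b, hb, hle⟩
      exact hcon b hb hle
    obtain ⟨φ, u, hφ1, hφ2⟩ := geometric_hahn_banach_closed_point hDconv hDclosed hnot
    set t : Fin m → ℝ := fun i => φ (Pi.single i 1) with ht
    have hφeq : ∀ y : Fin m → ℝ, φ y = ∑ i, t i * y i := by
      intro y
      have hy : y = ∑ i, y i • (Pi.single i 1 : Fin m → ℝ) := by
        funext j
        rw [Finset.sum_apply]
        simp [Pi.single_apply]
      conv_lhs => rw [hy]
      rw [map_sum]
      simp [ht, mul_comm]
    have hBmem : ∀ k, B k ∈ D := fun k =>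
      (hmemD _).2 ⟨B k, subset_convexHull ℝ _ (Set.mem_range_self k), le_rfl⟩
    have htpos : (0 : Fin m → ℝ) ≤ t := by
      rw [Pi.le_def]
      intro i
      simp only [Pi.zero_apply]
      by_contra hti
      push_neg at hti
      have k₀ : Fin N := Classical.arbitrary _
      have hu0 : φ (B k₀) < u := hφ1 _ (hBmem k₀)
      set s : ℝ := (φ (B k₀) - u) / t i with hs
      have hs0 : 0 ≤ s := div_nonneg_iff.2 (Or.inr ⟨by linarith, hti.le⟩)
      have hsingle : (0 : Fin m → ℝ) ≤ s • (Pi.single i 1 : Fin m → ℝ) := by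
        rw [Pi.le_def]
        intro j
        simp only [Pi.zero_apply, Pi.smul_apply, smul_eq_mul, Pi.single_apply]
        rcases eq_or_ne j i with rfl | hne
        · simp [hs0]
        · simp [hne]
      have hmem : B k₀ - s • (Pi.single i 1 : Fin m → ℝ) ∈ D :=
        (hmemD _).2 ⟨B k₀, subset_convexHull ℝ _ (Set.mem_range_self k₀),
          sub_le_self _ hsingle⟩
      have hlt := hφ1 _ hmem
      rw [map_sub, map_smul, smul_eq_mul] at hlt
      have hti' : φ (Pi.single i (1:ℝ)) = t i := rfl
      rw [hti', hs, div_mul_cancel₀ _ (ne_of_lt hti)] at hlt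
      linarith
    have hsup : (⨆ k, ∑ i, t i * B k i) ≤ u := by
      apply ciSup_le
      intro k
      have hk := hφ1 _ (hBmem k)
      rw [hφeq] at hk
      exact hk.le
    have h1 := h t htpos
    have h2 : u < c⁻¹ * ∑ i, t i * v i := by
      rw [hφeq] at hφ2
      calc u < ∑ i, t i * (c⁻¹ • v) i := hφ2
        _ = c⁻¹ * ∑ i, t i * v i := by
            rw [Finset.mul_sum]
            exact Finset.sum_congr rfl fun i _ => by simp [smul_eq_mul]; ring
    have h3 : c * u < ∑ i, t i * v i := by
      have := (mul_lt_mul_iff_right₀ hc).2 h2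
      rwa [mul_inv_cancel_left₀ hc.ne'] at this
    have h4 : c * u < c * ⨆ k, ∑ i, t i * B k i := lt_of_lt_of_le h3 h1
    have := (mul_lt_mul_iff_right₀ hc).1 h4
    linarith
  obtain ⟨b, hb, hvb⟩ := key
  intro T hT
  obtain ⟨hTconv, hTsolid, hTsub⟩ := hT
  have hbT : b ∈ T := convexHull_min hTsub hTconv hb
  refine hTsolid _ b ?_ hbT
  have hb0 : 0 ≤ b := hull_nonneg (fun w hw => by obtain ⟨k, rfl⟩ := hw; exact hB k) b hb
  have hv0 : 0 ≤ c⁻¹ • v := smul_nonneg (inv_nonneg.2 hc.le) hv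
  rw [abs_of_nonneg hv0, abs_of_nonneg hb0]
  exact hvb

lemma latpos {F : Type*} [NormedAddCommGroup F] [Lattice F] [IsOrderedAddMonoid F]
    [HasSolidNorm F] [NormedSpace ℝ F]
    {N M : ℕ} (f : F →ₗ[ℝ] (Fin N → Fin M → ℝ))
    (hf : ∀ x y : F, f (x ⊓ y) = f x ⊓ f y) {x : F} (hx : 0 ≤ x) : 0 ≤ f x := by
  have h0 : x ⊓ 0 = 0 := inf_eq_right.mpr hx
  have : f x ⊓ 0 = 0 := by
    have h1 := hf x 0
    rw [h0, map_zero] at h1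
    exact h1.symm
  exact inf_eq_right.mp this

lemma norm_comp {F : Type*} [NormedAddCommGroup F] [Lattice F] [IsOrderedAddMonoid F]
    [HasSolidNorm F] [NormedSpace ℝ F]
    {m N M : ℕ} (e : Fin m → F) (f : F →ₗ[ℝ] (Fin N → Fin M → ℝ))
    (hfe : ∀ i, 0 ≤ f (e i)) (t : Fin m → ℝ) (ht : 0 ≤ t) :
    linfl1Norm (f (∑ i, t i • e i)) = ⨆ k, ∑ i, t i * ∑ j, f (e i) k j := by
  unfold linfl1Norm
  apply iSup_congr
  intro k
  have hval : ∀ j, f (∑ i, t i • e i) k j = ∑ i, t i * f (e i) k j := by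
    intro j
    rw [map_sum]
    rw [Finset.sum_apply, Finset.sum_apply]
    apply Finset.sum_congr rfl
    intro i _
    simp
  calc ∑ j, |f (∑ i, t i • e i) k j| = ∑ j, ∑ i, t i * f (e i) k j := by
        apply Finset.sum_congr rfl
        intro j _
        rw [hval j]
        exact abs_of_nonneg (Finset.sum_nonneg fun i _ =>
          mul_nonneg (ht i) (hfe i k j))
    _ = ∑ i, t i * ∑ j, f (e i) k j := by
        rw [Finset.sum_comm]
        exact Finset.sum_congr rfl fun i _ => (Finset.mul_sum _ _ _).symm

lemma part1 {F : Type*} [NormedAddCommGroup F] [Lattice F] [IsOrderedAddMonoid F]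
    [HasSolidNorm F] [NormedSpace ℝ F]
    {m N M : ℕ} (e : Fin m → F) {C : ℝ} (hC : 1 ≤ C)
    (f₁ f₂ : F →ₗ[ℝ] (Fin N → Fin M → ℝ))
    (hpos1 : ∀ i, 0 ≤ f₁ (e i)) (hpos2 : ∀ i, 0 ≤ f₂ (e i))
    (hf₁ : ∀ x : F, linfl1Norm (f₁ x) ≤ C * ‖x‖)
    (hf₂ : ∀ x : F, (1 / C) * ‖x‖ ≤ linfl1Norm (f₂ x))
    (l : Fin N) :
    (fun i => ∑ j, f₁ (e i) l j) ∈
      (C ^ 2) • solidConvexHull {w | ∃ k : Fin N, w = fun i => ∑ j, f₂ (e i) k j} := by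
  haveI : Nonempty (Fin N) := ⟨l⟩
  have hC0 : (0 : ℝ) < C := lt_of_lt_of_le one_pos hC
  set A : Fin N → Fin m → ℝ := fun k i => ∑ j, f₁ (e i) k j with hA
  set B : Fin N → Fin m → ℝ := fun k i => ∑ j, f₂ (e i) k j with hB
  have hset : {w : Fin m → ℝ | ∃ k : Fin N, w = fun i => ∑ j, f₂ (e i) k j}
      = Set.range B := by
    ext w
    simp [hB, eq_comm]
  rw [hset]
  show A l ∈ (C ^ 2) • solidConvexHull (Set.range B)
  apply mem_smul_solid
  · intro i
    exact Finset.sum_nonneg fun j _ => hpos1 i l j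
  · intro k i
    exact Finset.sum_nonneg fun j _ => hpos2 i k j
  · positivity
  · intro t ht
    set x : F := ∑ i, t i • e i with hx
    have hbdd1 : BddAbove (Set.range fun k => ∑ i, t i * A k i) :=
      (Set.finite_range _).bddAbove
    have e1 : ∑ i, t i * A l i ≤ ⨆ k, ∑ i, t i * A k i := le_ciSup hbdd1 l
    have e2 : (⨆ k, ∑ i, t i * A k i) = linfl1Norm (f₁ x) :=
      (norm_comp e f₁ hpos1 t ht).symm
    have e3 : linfl1Norm (f₁ x) ≤ C * ‖x‖ := hf₁ x
    have e4 : ‖x‖ ≤ C * linfl1Norm (f₂ x) := by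
      have h := hf₂ x
      rw [div_mul_eq_mul_div, one_mul, div_le_iff₀ hC0] at h
      calc ‖x‖ ≤ linfl1Norm (f₂ x) * C := h
        _ = C * linfl1Norm (f₂ x) := mul_comm _ _
    have e5 : linfl1Norm (f₂ x) = ⨆ k, ∑ i, t i * B k i :=
      norm_comp e f₂ hpos2 t ht
    calc ∑ i, t i * A l i ≤ C * ‖x‖ := by
          rw [← e2] at e3; linarith
      _ ≤ C * (C * linfl1Norm (f₂ x)) := by
          apply mul_le_mul_of_nonneg_left e4 hC0.le
      _ = C ^ 2 * ⨆ k, ∑ i, t i * B k i := by rw [e5]; ring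

lemma solidConvexHull_min {m : ℕ} {S T : Set (Fin m → ℝ)}
    (hsub : S ⊆ solidConvexHull T) : solidConvexHull S ⊆ solidConvexHull T := by
  apply Set.sInter_subset_of_mem
  refine ⟨?_, ?_, hsub⟩
  · exact convex_sInter fun T' hT' => hT'.1
  · intro a b hab hb T' hT'
    exact hT'.2.1 a b hab (hb T' hT')


/-- Let `F` be a finite dimensional Banach lattice with atoms `e₁, …, e_m` and
`f₁, f₂ : F → ℓ∞^N(ℓ₁^M)` two `C`-isometric lattice embeddings.  Writing `A l i`
(resp. `B l i`) for the total mass of `f₁ (e i)` (resp. `f₂ (e i)`) in row `l`, every row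
vector `A l` lies in `C²` times the solid convex hull of the row vectors `{B k}`; in
particular, if both `f₁, f₂` are isometric, the two solid convex hulls coincide. -/
theorem stmt14 {F : Type*} [NormedAddCommGroup F] [Lattice F] [IsOrderedAddMonoid F]
    [HasSolidNorm F] [NormedSpace ℝ F]
    [FiniteDimensional ℝ F]
    {m N M : ℕ} (e : Fin m → F)
    (hpos : ∀ i, 0 < e i)
    (hdisj : ∀ i j, i ≠ j → e i ⊓ e j = 0)
    (hspan : Submodule.span ℝ (Set.range e) = ⊤)
    {C : ℝ} (hC : 1 ≤ C)
    (f₁ f₂ : F →ₗ[ℝ] (Fin N → Fin M → ℝ))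
    (hf₁lat : ∀ x y : F, f₁ (x ⊓ y) = f₁ x ⊓ f₁ y)
    (hf₂lat : ∀ x y : F, f₂ (x ⊓ y) = f₂ x ⊓ f₂ y)
    (hf₁ : ∀ x : F, (1 / C) * ‖x‖ ≤ linfl1Norm (f₁ x) ∧ linfl1Norm (f₁ x) ≤ C * ‖x‖)
    (hf₂ : ∀ x : F, (1 / C) * ‖x‖ ≤ linfl1Norm (f₂ x) ∧ linfl1Norm (f₂ x) ≤ C * ‖x‖) :
    (∀ l : Fin N,
      (fun i => ∑ j, f₁ (e i) l j) ∈
        (C ^ 2) • solidConvexHull {w | ∃ k : Fin N, w = fun i => ∑ j, f₂ (e i) k j}) ∧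
    ((∀ x : F, linfl1Norm (f₁ x) = ‖x‖) → (∀ x : F, linfl1Norm (f₂ x) = ‖x‖) →
      solidConvexHull {w | ∃ l : Fin N, w = fun i => ∑ j, f₁ (e i) l j} =
        solidConvexHull {w | ∃ k : Fin N, w = fun i => ∑ j, f₂ (e i) k j}) := by
  have h1pos : ∀ i, 0 ≤ f₁ (e i) := fun i => latpos f₁ hf₁lat (hpos i).le
  have h2pos : ∀ i, 0 ≤ f₂ (e i) := fun i => latpos f₂ hf₂lat (hpos i).le
  constructor
  · intro l
    exact part1 e hC f₁ f₂ h1pos h2pos (fun x => (hf₁ x).2) (fun x => (hf₂ x).1) l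
  · intro hiso1 hiso2
    have p12 : ∀ l : Fin N, (fun i => ∑ j, f₁ (e i) l j) ∈
        solidConvexHull {w | ∃ k : Fin N, w = fun i => ∑ j, f₂ (e i) k j} := by
      intro l
      have := part1 e (le_refl (1:ℝ)) f₁ f₂ h1pos h2pos
        (fun x => by rw [hiso1 x]; linarith [norm_nonneg x])
        (fun x => by rw [hiso2 x]; simp) l
      simpa [one_pow, one_smul] using this
    have p21 : ∀ l : Fin N, (fun i => ∑ j, f₂ (e i) l j) ∈
        solidConvexHull {w | ∃ k : Fin N, w = fun i => ∑ j, f₁ (e i) k j} := by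
      intro l
      have := part1 e (le_refl (1:ℝ)) f₂ f₁ h2pos h1pos
        (fun x => by rw [hiso2 x]; linarith [norm_nonneg x])
        (fun x => by rw [hiso1 x]; simp) l
      simpa [one_pow, one_smul] using this
    apply subset_antisymm
    · exact solidConvexHull_min (fun w hw => by obtain ⟨l, rfl⟩ := hw; exact p12 l)
    · exact solidConvexHull_min (fun w hw => by obtain ⟨k, rfl⟩ := hw; exact p21 k)
end

section
/- Let 𝔅𝔏 be a separable Banach lattice that is approximately ultra-homogeneous for the class of finitely generated Banach lattices and isometrically universal for separable Banach lattices. Then 𝔅𝔏 is atomless: it contains no atoms. -/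
open TopologicalSpace

/-- The closed sublattice of a Banach lattice generated by a set `S`. -/
def latticeGen {E : Type*} [NormedAddCommGroup E] [Lattice E] [IsOrderedAddMonoid E] [HasSolidNorm E] [NormedSpace ℝ E]
    (S : Set E) : Set E :=
  ⋂₀ {T : Set E | IsClosed T ∧ S ⊆ T ∧ (∀ a ∈ T, ∀ b ∈ T, a + b ∈ T) ∧
      (∀ (c : ℝ), ∀ a ∈ T, c • a ∈ T) ∧ (∀ a ∈ T, ∀ b ∈ T, a ⊓ b ∈ T) ∧
      (∀ a ∈ T, ∀ b ∈ T, a ⊔ b ∈ T)}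

/-- A linear map between Banach lattices is an isometric lattice embedding if it preserves
the lattice operations and the norm. -/
def IsLatticeIsometricEmbedding {X Y : Type*}
    [NormedAddCommGroup X] [Lattice X] [IsOrderedAddMonoid X] [HasSolidNorm X] [NormedSpace ℝ X]
    [NormedAddCommGroup Y] [Lattice Y] [IsOrderedAddMonoid Y] [HasSolidNorm Y] [NormedSpace ℝ Y]
    (f : X →ₗ[ℝ] Y) : Prop :=
  (∀ x y : X, f (x ⊓ y) = f x ⊓ f y) ∧ (∀ x : X, ‖f x‖ = ‖x‖)

/-- `X` is approximately ultra-homogeneous for finitely generated Banach lattices: given a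
finitely generated Banach lattice `A` with generators `ā` and two isometric lattice
embeddings `ι, f : A → X` (`ι` realizing `A` as a sublattice `⟨ā⟩ ⊆ X`), for every
`ε > 0` there is a surjective lattice isometry `φ` of `X` with `‖f ā - φ (ι ā)‖ < ε`. -/
def ApproxUltraHomogeneous (X : Type*) [NormedAddCommGroup X] [Lattice X] [IsOrderedAddMonoid X] [HasSolidNorm X] [NormedSpace ℝ X] :
    Prop :=
  ∀ (A : Type) (_ : NormedAddCommGroup A) (_ : Lattice A) (_ : IsOrderedAddMonoid A)
      (_ : HasSolidNorm A) (_ : NormedSpace ℝ A) (_ : CompleteSpace A)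
    (n : ℕ) (a : Fin n → A), latticeGen (Set.range a) = Set.univ →
    ∀ (ι f : A →ₗ[ℝ] X),
      IsLatticeIsometricEmbedding ι → IsLatticeIsometricEmbedding f →
      ∀ ε : ℝ, 0 < ε →
        ∃ φ : X ≃ₗ[ℝ] X, (∀ x : X, ‖φ x‖ = ‖x‖) ∧ (∀ x y : X, φ (x ⊓ y) = φ x ⊓ φ y) ∧
          ∀ i, ‖f (a i) - φ (ι (a i))‖ < ε

/-- `X` is isometrically universal for separable Banach lattices. -/
def IsometricallyUniversalSep (X : Type*) [NormedAddCommGroup X] [Lattice X] [IsOrderedAddMonoid X] [HasSolidNorm X] [NormedSpace ℝ X] :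
    Prop :=
  ∀ (Y : Type) (_ : NormedAddCommGroup Y) (_ : Lattice Y) (_ : IsOrderedAddMonoid Y)
      (_ : HasSolidNorm Y) (_ : NormedSpace ℝ Y) (_ : CompleteSpace Y)
    (_ : SeparableSpace Y),
    ∃ f : Y →ₗ[ℝ] X, IsLatticeIsometricEmbedding f

open Filter Topology

section Aux
variable {E : Type*} [NormedAddCommGroup E] [Lattice E] [IsOrderedAddMonoid E] [HasSolidNorm E] [NormedSpace ℝ E]

lemma aux_nsmul_pow_two (m : ℕ) : ∀ {x : E}, 0 ≤ (2 ^ m) • x → 0 ≤ x := by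
  induction m with
  | zero => intro x h; simpa using h
  | succ m ih =>
    intro x h
    rw [pow_succ, mul_comm, mul_nsmul] at h
    exact nsmul_two_semiclosed (ih h)

lemma aux_dyadic_smul_nonneg {e : E} (he : 0 ≤ e) (k m : ℕ) :
    0 ≤ ((k : ℝ) / 2 ^ m) • e := by
  apply aux_nsmul_pow_two m
  rw [← Nat.cast_smul_eq_nsmul ℝ, smul_smul]
  have : ((2 ^ m : ℕ) : ℝ) * ((k : ℝ) / 2 ^ m) = (k : ℝ) := by
    push_cast
    field_simp
  rw [this, Nat.cast_smul_eq_nsmul]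
  exact nsmul_nonneg he k

lemma aux_smul_nonneg_s18 {e : E} (he : 0 ≤ e) {c : ℝ} (hc : 0 ≤ c) : 0 ≤ c • e := by
  have hclosed : IsClosed {x : E | 0 ≤ x} := isClosed_le continuous_const continuous_id
  set s : ℕ → ℝ := fun n => (⌊c * 2 ^ n⌋₊ : ℝ) / 2 ^ n with hs
  have hle : ∀ n, s n ≤ c := by
    intro n
    rw [hs]
    rw [div_le_iff₀ (by positivity)]
    exact Nat.floor_le (by positivity)
  have hge : ∀ n, c - (1/2) ^ n ≤ s n := by
    intro n
    have h1 : c * 2 ^ n < (⌊c * 2 ^ n⌋₊ : ℝ) + 1 := Nat.lt_floor_add_one _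
    rw [hs, sub_le_iff_le_add, div_add' _ _ _ (by positivity)]
    rw [le_div_iff₀ (by positivity : (0:ℝ) < 2 ^ n)]
    have : (1/2 : ℝ) ^ n * 2 ^ n = 1 := by
      rw [← mul_pow]; norm_num
    nlinarith [h1]
  have htend : Tendsto s atTop (𝓝 c) := by
    have h0 : Tendsto (fun n : ℕ => c - (1/2:ℝ) ^ n) atTop (𝓝 c) := by
      have := tendsto_pow_atTop_nhds_zero_of_lt_one (by norm_num : (0:ℝ) ≤ 1/2) (by norm_num)
      simpa using (tendsto_const_nhds (x := c)).sub this
    exact tendsto_of_tendsto_of_tendsto_of_le_of_le h0 tendsto_const_nhds hge hle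
  have htend2 : Tendsto (fun n => s n • e) atTop (𝓝 (c • e)) := htend.smul_const e
  exact hclosed.mem_of_tendsto htend2
    (Filter.Eventually.of_forall fun n => aux_dyadic_smul_nonneg he _ n)

lemma aux_smul_le_smul_s18 {e : E} (he : 0 ≤ e) {a b : ℝ} (hab : a ≤ b) : a • e ≤ b • e := by
  have := aux_smul_nonneg_s18 he (sub_nonneg.2 hab)
  rw [sub_smul] at this
  exact sub_nonneg.1 this

lemma aux_min_smul {e : E} (he : 0 ≤ e) (a b : ℝ) :
    (a ⊓ b) • e = a • e ⊓ b • e := by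
  rcases le_total a b with h | h
  · rw [inf_eq_left.2 h, inf_eq_left.2 (aux_smul_le_smul_s18 he h)]
  · rw [inf_eq_right.2 h, inf_eq_right.2 (aux_smul_le_smul_s18 he h)]

end Aux

noncomputable instance instPi2NLACG : HasSolidNorm (Fin 2 → ℝ) :=
  { solid := fun a b h => by
      rw [pi_norm_le_iff_of_nonneg (norm_nonneg b)]
      intro i
      calc ‖a i‖ = |a i| := Real.norm_eq_abs _
        _ ≤ |b i| := h i
        _ = ‖b i‖ := (Real.norm_eq_abs _).symm
        _ ≤ ‖b‖ := norm_le_pi_norm b i }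

section MainProof
variable {X : Type} [NormedAddCommGroup X] [Lattice X] [IsOrderedAddMonoid X] [HasSolidNorm X] [NormedSpace ℝ X]

lemma latticeGen_one : latticeGen (Set.range (fun _ : Fin 1 => (1:ℝ))) = Set.univ := by
  ext x
  simp only [Set.mem_univ, iff_true]
  intro T hT
  obtain ⟨-, hS, -, hsmul, -, -⟩ := hT
  have h1 : (1:ℝ) ∈ T := hS ⟨0, rfl⟩
  simpa using hsmul x 1 h1

end MainProof

/-- A separable Banach lattice which is approximately ultra-homogeneous for finitely
generated Banach lattices and isometrically universal for separable Banach lattices is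
atomless: it contains no atom, i.e. no `e > 0` such that every `0 ≤ x ≤ e` is a multiple
`t • e` with `t ∈ [0, 1]`. -/
theorem stmt18 {X : Type}
    [NormedAddCommGroup X] [Lattice X] [IsOrderedAddMonoid X] [HasSolidNorm X] [NormedSpace ℝ X] [CompleteSpace X] [SeparableSpace X]
    (hhom : ApproxUltraHomogeneous X) (huniv : IsometricallyUniversalSep X) :
    ¬ ∃ e : X, 0 < e ∧
      ∀ x : X, 0 ≤ x → x ≤ e → ∃ t : ℝ, 0 ≤ t ∧ t ≤ 1 ∧ x = t • e := by
  rintro ⟨e, he, hatom⟩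
  have hen : (0:ℝ) < ‖e‖ := norm_pos_iff.mpr he.ne'
  set e₁ : X := ‖e‖⁻¹ • e with he₁def
  have he₁nn : 0 ≤ e₁ := aux_smul_nonneg_s18 he.le (by positivity)
  have he₁norm : ‖e₁‖ = 1 := by
    rw [he₁def, norm_smul, Real.norm_eq_abs, abs_of_pos (by positivity)]
    field_simp
  -- atom property of e₁
  have he₁atom : ∀ x : X, 0 ≤ x → x ≤ e₁ → ∃ t : ℝ, 0 ≤ t ∧ t ≤ 1 ∧ x = t • e₁ := by
    intro x hx hxe
    have h1 : ‖e‖ • x ≤ ‖e‖ • e₁ := by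
      have := aux_smul_nonneg_s18 (sub_nonneg.2 hxe) hen.le
      rw [smul_sub] at this
      exact sub_nonneg.1 this
    have h2 : ‖e‖ • e₁ = e := by
      rw [he₁def, smul_smul, mul_inv_cancel₀ hen.ne', one_smul]
    have h1' : ‖e‖ • x ≤ e := h1.trans_eq h2
    obtain ⟨t, ht0, ht1, htx⟩ := hatom (‖e‖ • x) (aux_smul_nonneg_s18 hx hen.le) h1' 
    refine ⟨t, ht0, ht1, ?_⟩
    have : x = ‖e‖⁻¹ • (‖e‖ • x) := by
      rw [smul_smul, inv_mul_cancel₀ hen.ne', one_smul]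
    rw [this, htx, he₁def, smul_comm]
  -- universality: get disjoint positive u, v
  obtain ⟨g, hginf, hgnorm⟩ := huniv (Fin 2 → ℝ) inferInstance inferInstance inferInstance inferInstance
    inferInstance inferInstance inferInstance
  have gmono : ∀ {p q : Fin 2 → ℝ}, p ≤ q → g p ≤ g q := by
    intro p q hpq
    rw [← inf_eq_left] at hpq ⊢
    rw [← hginf, hpq]
  set u : X := g ![1, 0] with hu
  set v : X := g ![0, 1] with hv
  set y : X := g ![1, 1] with hy
  have huv : u ⊓ v = 0 := by
    rw [hu, hv, ← hginf]
    have : (![1, 0] : Fin 2 → ℝ) ⊓ ![0, 1] = 0 := by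
      funext i
      fin_cases i <;> simp [Pi.inf_apply]
    rw [this, map_zero]
  have hvnn : 0 ≤ v := by
    have : g 0 ≤ v := gmono (by intro i; fin_cases i <;> norm_num)
    rwa [map_zero] at this
  have hunn : 0 ≤ u := by
    have : g 0 ≤ u := gmono (by intro i; fin_cases i <;> norm_num)
    rwa [map_zero] at this
  have huy : u ≤ y := gmono (by intro i; fin_cases i <;> norm_num)
  have hvy : v ≤ y := gmono (by intro i; fin_cases i <;> norm_num)
  have hnorm11 : ‖(![1, 1] : Fin 2 → ℝ)‖ = 1 := by
    apply le_antisymm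
    · rw [pi_norm_le_iff_of_nonneg zero_le_one]
      intro i
      fin_cases i <;> simp
    · calc (1:ℝ) = ‖(![1, 1] : Fin 2 → ℝ) 0‖ := by norm_num
        _ ≤ _ := norm_le_pi_norm _ 0
  have hnorm10 : ‖(![1, 0] : Fin 2 → ℝ)‖ = 1 := by
    apply le_antisymm
    · rw [pi_norm_le_iff_of_nonneg zero_le_one]
      intro i
      fin_cases i <;> simp
    · calc (1:ℝ) = ‖(![1, 0] : Fin 2 → ℝ) 0‖ := by norm_num
        _ ≤ _ := norm_le_pi_norm _ 0
  have hnorm01 : ‖(![0, 1] : Fin 2 → ℝ)‖ = 1 := by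
    apply le_antisymm
    · rw [pi_norm_le_iff_of_nonneg zero_le_one]
      intro i
      fin_cases i <;> simp
    · calc (1:ℝ) = ‖(![0, 1] : Fin 2 → ℝ) 1‖ := by norm_num
        _ ≤ _ := norm_le_pi_norm _ 1
  have hyn : ‖y‖ = 1 := by rw [hy, hgnorm, hnorm11]
  have hun : ‖u‖ = 1 := by rw [hu, hgnorm, hnorm10]
  have hvn : ‖v‖ = 1 := by rw [hv, hgnorm, hnorm01]
  -- homogeneity
  set ι : ℝ →ₗ[ℝ] X := LinearMap.toSpanSingleton ℝ X e₁ with hιdef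
  set f : ℝ →ₗ[ℝ] X := LinearMap.toSpanSingleton ℝ X y with hfdef
  have hynn : 0 ≤ y := hunn.trans huy
  have hι : IsLatticeIsometricEmbedding ι := by
    constructor
    · intro s t
      exact aux_min_smul he₁nn s t
    · intro t
      rw [hιdef, LinearMap.toSpanSingleton_apply, norm_smul, he₁norm, mul_one]
  have hf : IsLatticeIsometricEmbedding f := by
    constructor
    · intro s t
      exact aux_min_smul hynn s t
    · intro t
      rw [hfdef, LinearMap.toSpanSingleton_apply, norm_smul, hyn, mul_one]
  obtain ⟨φ, hφnorm, hφinf, hφclose⟩ := hhom ℝ inferInstance inferInstance inferInstance inferInstance inferInstance inferInstance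
    1 (fun _ => (1:ℝ)) latticeGen_one ι f hι hf (1/2) (by norm_num)
  have hclose : ‖y - φ e₁‖ < 1/2 := by
    have := hφclose 0
    simpa [hfdef, hιdef, LinearMap.toSpanSingleton_apply] using this
  set b : X := φ e₁ with hbdef
  have hbnorm : ‖b‖ = 1 := by rw [hbdef, hφnorm, he₁norm]
  have φmono : ∀ {p q : X}, p ≤ q → φ p ≤ φ q := by
    intro p q hpq
    rw [← inf_eq_left] at hpq ⊢
    rw [← hφinf, hpq]
  have φmono' : ∀ {p q : X}, φ p ≤ φ q → p ≤ q := by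
    intro p q hpq
    rw [← inf_eq_left] at hpq ⊢
    rw [← hφinf] at hpq
    exact φ.injective hpq
  have hbnn : 0 ≤ b := by
    have := φmono he₁nn
    rwa [map_zero] at this
  -- b is an atom
  have hbatom : ∀ z : X, 0 ≤ z → z ≤ b → ∃ t : ℝ, 0 ≤ t ∧ t ≤ 1 ∧ z = t • b := by
    intro z hz hzb
    have h0 : 0 ≤ φ.symm z := by
      apply φmono'
      rw [LinearEquiv.apply_symm_apply, map_zero]
      exact hz
    have h1 : φ.symm z ≤ e₁ := by
      apply φmono'
      rw [LinearEquiv.apply_symm_apply]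
      exact hzb
    obtain ⟨t, ht0, ht1, htz⟩ := he₁atom _ h0 h1
    refine ⟨t, ht0, ht1, ?_⟩
    have : z = φ (φ.symm z) := (φ.apply_symm_apply z).symm
    rw [this, htz, map_smul]
  obtain ⟨s, hs0, -, hsu⟩ := hbatom (u ⊓ b) (le_inf hunn hbnn) inf_le_right
  obtain ⟨t, ht0, -, htv⟩ := hbatom (v ⊓ b) (le_inf hvnn hbnn) inf_le_right
  have hbne : b ≠ 0 := by
    intro h
    rw [h, norm_zero] at hbnorm
    norm_num at hbnorm
  have hminst : (s ⊓ t) • b = 0 := by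
    rw [aux_min_smul hbnn, ← hsu, ← htv]
    rw [inf_assoc, inf_comm b (v ⊓ b), inf_assoc, inf_idem, ← inf_assoc, huv]
    exact inf_eq_left.2 hbnn
  have hst : s = 0 ∨ t = 0 := by
    rcases smul_eq_zero.1 hminst with h | h
    · rcases le_total s t with hle | hle
      · left; rwa [inf_eq_left.2 hle] at h
      · right; rwa [inf_eq_right.2 hle] at h
    · exact absurd h hbne
  -- in either case, a norm-one disjoint piece survives in y - b
  have key : ∀ w : X, 0 ≤ w → w ≤ y → w ⊓ b = 0 → ‖w‖ ≤ ‖y - b‖ := by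
    intro w hw hwy hwb
    have h1 : w = 0 ⊔ (w - b) := by
      have : w - (w ⊓ b) = (w - w) ⊔ (w - b) := sub_inf w b w
      rw [hwb, sub_zero, sub_self] at this
      exact this
    have h2 : (0:X) ⊔ (w - b) ≤ 0 ⊔ (y - b) :=
      sup_le_sup_left (sub_le_sub_right hwy b) 0
    have h3 : (0:X) ⊔ (y - b) ≤ |y - b| :=
      sup_le (abs_nonneg _) (le_abs_self _)
    have h4 : |w| ≤ |y - b| := by
      rw [abs_of_nonneg hw]
      exact h1 ▸ (h2.trans h3)
    exact HasSolidNorm.solid h4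
  rcases hst with h | h
  · -- s = 0 : u ⊓ b = 0
    have hub : u ⊓ b = 0 := by rw [hsu, h, zero_smul]
    have := key u hunn huy hub
    rw [hun] at this
    linarith [hclose.trans_le' this]
  · have hvb : v ⊓ b = 0 := by rw [htv, h, zero_smul]
    have := key v hvnn hvy hvb
    rw [hvn] at this
    linarith [hclose.trans_le' this]
end

section
/- The separable universal Banach lattice 𝒰 = C(Δ, L₁[0,1]) is not approximately ultra-homogeneous: letting a = 1_Δ ⊗ χ_{[0,1]} and b = 1_K ⊗ χ_{[0,1]} for a proper nonempty clopen K ⊆ Δ, both a and b have norm 1, but every surjective lattice isometry φ of 𝒰 satisfies ‖φ(b) − a‖ ≥ 1. -/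
open MeasureTheory

noncomputable section

/-- Lebesgue measure on `[0,1]`. -/
abbrev μ01 : Measure ℝ := volume.restrict (Set.Icc (0 : ℝ) 1)

instance : IsFiniteMeasure μ01 :=
  ⟨by rw [Measure.restrict_apply_univ, Real.volume_Icc]; exact ENNReal.ofReal_lt_top⟩

/-- The element `χ_{[0,1]}` of `L₁[0,1]`, i.e. the constant function `1`. -/
def oneL1 : Lp ℝ 1 μ01 := (memLp_const (1 : ℝ)).toLp _

lemma norm_oneL1 : ‖oneL1‖ = 1 := by
  rw [MeasureTheory.L1.norm_eq_integral_norm]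
  have h : ∫ x, ‖(oneL1 : Lp ℝ 1 μ01) x‖ ∂μ01 = ∫ _x, (1 : ℝ) ∂μ01 := by
    refine integral_congr_ae ?_
    filter_upwards [(memLp_const (1 : ℝ)).coeFn_toLp (μ := μ01) (p := 1)] with x hx
    rw [show (oneL1 : Lp ℝ 1 μ01) x = 1 from hx]
    simp
  rw [h, integral_const, smul_eq_mul, mul_one]
  simp [Measure.restrict_apply_univ, Real.volume_Icc]

lemma oneL1_nonneg : (0 : Lp ℝ 1 μ01) ≤ oneL1 := by
  rw [← MeasureTheory.Lp.coeFn_nonneg]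
  filter_upwards [(memLp_const (1 : ℝ)).coeFn_toLp (μ := μ01) (p := 1)] with x hx
  rw [show (oneL1 : Lp ℝ 1 μ01) x = 1 from hx]
  norm_num

lemma norm_eq_integral_of_nonneg (f : Lp ℝ 1 μ01) (hf : 0 ≤ f) :
    ‖f‖ = ∫ x, f x ∂μ01 := by
  rw [MeasureTheory.L1.norm_eq_integral_norm]
  refine integral_congr_ae ?_
  filter_upwards [(MeasureTheory.Lp.coeFn_nonneg f).mpr hf] with x hx
  simpa [Real.norm_eq_abs] using abs_of_nonneg hx

lemma norm_add_of_nonneg (f g : Lp ℝ 1 μ01) (hf : 0 ≤ f) (hg : 0 ≤ g) :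
    ‖f + g‖ = ‖f‖ + ‖g‖ := by
  rw [norm_eq_integral_of_nonneg f hf, norm_eq_integral_of_nonneg g hg,
    norm_eq_integral_of_nonneg (f + g) (add_nonneg hf hg)]
  have h : ∫ x, (f + g : Lp ℝ 1 μ01) x ∂μ01 = ∫ x, (f x + g x) ∂μ01 := by
    refine integral_congr_ae ?_
    filter_upwards [MeasureTheory.Lp.coeFn_add f g] with x hx
    simpa using hx
  rw [h, integral_add (MeasureTheory.L1.integrable_coeFn f)
    (MeasureTheory.L1.integrable_coeFn g)]

/-- The separable universal Banach lattice `𝒰 = C(Δ, L₁[0,1])` (where `Δ = {0,1}^ℕ` is the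
Cantor set) is not approximately ultra-homogeneous: for a proper nonempty clopen
`K ⊆ Δ`, the elements `a = 1_Δ ⊗ χ_{[0,1]}` and `b = 1_K ⊗ χ_{[0,1]}` both have norm `1`,
but every surjective lattice isometry `φ` of `𝒰` satisfies `‖φ b - a‖ ≥ 1`. -/
theorem stmt19 (K : Set (ℕ → Bool)) (hK : IsClopen K) (hne : K.Nonempty)
    (hproper : K ≠ Set.univ) :
    ∃ a b : C((ℕ → Bool), Lp ℝ 1 μ01),
      (∀ k, a k = oneL1) ∧
      (∀ k ∈ K, b k = oneL1) ∧ (∀ k ∉ K, b k = 0) ∧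
      ‖a‖ = 1 ∧ ‖b‖ = 1 ∧
      ∀ φ : C((ℕ → Bool), Lp ℝ 1 μ01) ≃ₗ[ℝ] C((ℕ → Bool), Lp ℝ 1 μ01),
        (∀ f, ‖φ f‖ = ‖f‖) →
        (∀ f g : C((ℕ → Bool), Lp ℝ 1 μ01), (∀ k, f k ≤ g k) ↔ (∀ k, φ f k ≤ φ g k)) →
        1 ≤ ‖φ b - a‖ := by
  classical
  obtain ⟨k₁, hk₁⟩ := hne
  obtain ⟨k₂, hk₂⟩ : ∃ k, k ∉ K := by
    by_contra h
    push_neg at h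
    exact hproper (Set.eq_univ_of_forall h)
  -- the two elements
  set a : C((ℕ → Bool), Lp ℝ 1 μ01) := ContinuousMap.const (ℕ → Bool) oneL1 with ha_def
  have hbcont : Continuous (K.indicator fun _ : (ℕ → Bool) => oneL1) := by
    refine continuous_indicator ?_ continuous_const.continuousOn
    intro x hx
    rw [hK.frontier_eq] at hx
    exact absurd hx (Set.notMem_empty x)
  set b : C((ℕ → Bool), Lp ℝ 1 μ01) := ⟨K.indicator fun _ => oneL1, hbcont⟩ with hb_def
  have ha : ∀ k, a k = oneL1 := fun _ => rfl
  have hbK : ∀ k ∈ K, b k = oneL1 := by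
    intro k hk
    show K.indicator (fun _ => oneL1) k = oneL1
    exact Set.indicator_of_mem hk _
  have hbKc : ∀ k ∉ K, b k = 0 := by
    intro k hk
    show K.indicator (fun _ => oneL1) k = 0
    exact Set.indicator_of_notMem hk _
  refine ⟨a, b, ha, hbK, hbKc, ?_, ?_, ?_⟩
  · -- ‖a‖ = 1
    refine le_antisymm ((ContinuousMap.norm_le _ zero_le_one).mpr fun x => ?_) ?_
    · rw [ha x, norm_oneL1]
    · calc (1 : ℝ) = ‖a k₁‖ := by rw [ha k₁, norm_oneL1]
        _ ≤ ‖a‖ := a.norm_coe_le_norm k₁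
  · -- ‖b‖ = 1
    refine le_antisymm ((ContinuousMap.norm_le _ zero_le_one).mpr fun x => ?_) ?_
    · by_cases hx : x ∈ K
      · rw [hbK x hx, norm_oneL1]
      · rw [hbKc x hx, norm_zero]; exact zero_le_one
    · calc (1 : ℝ) = ‖b k₁‖ := by rw [hbK k₁ hk₁, norm_oneL1]
        _ ≤ ‖b‖ := b.norm_coe_le_norm k₁
  · intro φ hnorm horder
    set c : C((ℕ → Bool), Lp ℝ 1 μ01) := a - b with hc_def
    -- pointwise nonnegativity of b and c
    have hb_nonneg : ∀ k, (0 : C((ℕ → Bool), Lp ℝ 1 μ01)) k ≤ b k := by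
      intro k
      by_cases hk : k ∈ K
      · rw [hbK k hk]; exact oneL1_nonneg
      · rw [hbKc k hk]; exact le_refl _
    have hc_nonneg : ∀ k, (0 : C((ℕ → Bool), Lp ℝ 1 μ01)) k ≤ c k := by
      intro k
      have hck : c k = a k - b k := rfl
      by_cases hk : k ∈ K
      · rw [hck, ha k, hbK k hk, sub_self]
        exact le_of_eq (ContinuousMap.zero_apply k)
      · rw [hck, ha k, hbKc k hk, sub_zero]; exact oneL1_nonneg
    have hφb_nonneg : ∀ k, (0 : Lp ℝ 1 μ01) ≤ φ b k := by
      intro k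
      have := ((horder 0 b).mp hb_nonneg) k
      rwa [map_zero φ] at this
    have hφc_nonneg : ∀ k, (0 : Lp ℝ 1 μ01) ≤ φ c k := by
      intro k
      have := ((horder 0 c).mp hc_nonneg) k
      rwa [map_zero φ] at this
    -- ‖c‖ = 1
    have hnc : ‖c‖ = 1 := by
      refine le_antisymm ((ContinuousMap.norm_le _ zero_le_one).mpr fun x => ?_) ?_
      · have hcx : c x = a x - b x := rfl
        by_cases hx : x ∈ K
        · rw [hcx, ha x, hbK x hx, sub_self, norm_zero]; exact zero_le_one
        · rw [hcx, ha x, hbKc x hx, sub_zero, norm_oneL1]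
      · have hck₂ : c k₂ = oneL1 := by
          have : c k₂ = a k₂ - b k₂ := rfl
          rw [this, ha k₂, hbKc k₂ hk₂, sub_zero]
        calc (1 : ℝ) = ‖c k₂‖ := by rw [hck₂, norm_oneL1]
          _ ≤ ‖c‖ := c.norm_coe_le_norm k₂
    -- pick a maximizer of ‖φ c ·‖
    have hcont : Continuous fun k : (ℕ → Bool) => ‖(φ c) k‖ := (φ c).continuous.norm
    obtain ⟨k₀, -, hk₀⟩ := isCompact_univ.exists_isMaxOn ⟨k₁, Set.mem_univ k₁⟩
      hcont.continuousOn
    have h1le : (1 : ℝ) ≤ ‖φ c k₀‖ := by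
      have hle : ‖φ c‖ ≤ ‖φ c k₀‖ :=
        (ContinuousMap.norm_le _ (norm_nonneg _)).mpr fun x => hk₀ (Set.mem_univ x)
      calc (1 : ℝ) = ‖c‖ := hnc.symm
        _ = ‖φ c‖ := (hnorm c).symm
        _ ≤ ‖φ c k₀‖ := hle
    -- φ a = φ b + φ c
    have hsum : φ a k₀ = φ b k₀ + φ c k₀ := by
      have : a = b + c := by rw [hc_def]; abel
      rw [this, map_add φ]; rfl
    have hφa_le : ‖φ a k₀‖ ≤ 1 := by
      calc ‖φ a k₀‖ ≤ ‖φ a‖ := (φ a).norm_coe_le_norm k₀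
        _ = ‖a‖ := hnorm a
        _ = 1 := by
          refine le_antisymm ((ContinuousMap.norm_le _ zero_le_one).mpr fun x => ?_) ?_
          · rw [ha x, norm_oneL1]
          · calc (1 : ℝ) = ‖a k₁‖ := by rw [ha k₁, norm_oneL1]
              _ ≤ ‖a‖ := a.norm_coe_le_norm k₁
    -- norms add on nonnegatives, so φ b k₀ = 0
    have hadd : ‖φ b k₀ + φ c k₀‖ = ‖φ b k₀‖ + ‖φ c k₀‖ :=
      norm_add_of_nonneg _ _ (hφb_nonneg k₀) (hφc_nonneg k₀)
    have hφb0 : φ b k₀ = 0 := by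
      have : ‖φ b k₀‖ + ‖φ c k₀‖ ≤ 1 := by rw [← hadd, ← hsum]; exact hφa_le
      have hle0 : ‖φ b k₀‖ ≤ 0 := by linarith
      exact norm_le_zero_iff.mp hle0
    -- conclude
    have heval : (φ b - a) k₀ = -oneL1 := by
      have : (φ b - a) k₀ = φ b k₀ - a k₀ := rfl
      rw [this, hφb0, ha k₀, zero_sub]
    calc (1 : ℝ) = ‖(φ b - a) k₀‖ := by rw [heval, norm_neg, norm_oneL1]
      _ ≤ ‖φ b - a‖ := (φ b - a).norm_coe_le_norm k₀

end
end
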